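/- If G is a graph in which every two vertices are at distance at most 2, then in the duplication G' of G every two vertices are at distance at most 2, i.e., G' is a 2-club. -/

import Mathlib

/-- The duplication `G'` of a graph `G`: the graph on vertex set `V × {1,2}`
(here `V × Bool`) in which `(v,i)` and `(w,j)` are adjacent if and only if either
`i = j` and `vw ∈ E(G)`, or `i ≠ j` and (`v = w` or `vw ∈ E(G)`). -/
def duplication {V : Type*} (G : SimpleGraph V) : SimpleGraph (V × Bool) where
  Adj a b := (a.2 = b.2 ∧ G.Adj a.1 b.1) ∨ (a.2 ≠ b.2 ∧ (a.1 = b.1 ∨ G.Adj a.1 b.1))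
  symm := by
    constructor
    rintro ⟨v, i⟩ ⟨w, j⟩ (⟨h1, h2⟩ | ⟨h1, h2⟩)
    · exact Or.inl ⟨h1.symm, h2.symm⟩
    · exact Or.inr ⟨h1.symm, h2.imp Eq.symm SimpleGraph.Adj.symm⟩
  loopless := by
    constructor
    rintro ⟨v, i⟩ (⟨_, h⟩ | ⟨h, _⟩)
    · exact G.irrefl h
    · exact h rfl

/-- If `G` is a graph in which every two vertices are at distance at most 2, then
in the duplication `G'` of `G` every two vertices are at distance at most 2,
i.e., `G'` is a 2-club. -/
theorem duplication_two_club {V : Type*} [Fintype V] (G : SimpleGraph V)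
    (hdiam : ∀ u v : V, u = v ∨ G.Adj u v ∨ ∃ x : V, G.Adj u x ∧ G.Adj x v) :
    ∀ a b : V × Bool, a = b ∨ (duplication G).Adj a b ∨
      ∃ w : V × Bool, (duplication G).Adj a w ∧ (duplication G).Adj w b := by
  rintro ⟨v, i⟩ ⟨w, j⟩
  by_cases hij : i = j
  · subst hij
    rcases hdiam v w with h | h | ⟨x, hx1, hx2⟩
    · exact Or.inl (by simp [h])
    · exact Or.inr (Or.inl (Or.inl ⟨rfl, h⟩))
    · exact Or.inr (Or.inr ⟨(x, i), Or.inl ⟨rfl, hx1⟩, Or.inl ⟨rfl, hx2⟩⟩)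
  · rcases hdiam v w with h | h | ⟨x, hx1, hx2⟩
    · exact Or.inr (Or.inl (Or.inr ⟨hij, Or.inl h⟩))
    · exact Or.inr (Or.inl (Or.inr ⟨hij, Or.inr h⟩))
    · exact Or.inr (Or.inr ⟨(x, i), Or.inl ⟨rfl, hx1⟩, Or.inr ⟨hij, Or.inr hx2⟩⟩)
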